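/- arXiv:1111.2664 — 2 statements merged into one kernel-verified Lean document; each statement's English description precedes it below -/
import Mathlib

section
/- Let C : ℝ^n → ℝ be convex, differentiable, and strictly convex, and suppose its convex conjugate C* is differentiable at every point of the image ∇C(ℝ^n) := {∇C(s) : s ∈ ℝ^n}. Let O be an outcome space and ρ : O → ℝ^n satisfy ρ(X) ∈ ∇C(ℝ^n) for all X ∈ O. Then for all s, s' ∈ ℝ^n and all X ∈ O, the ex-post profit of the trade (s ↦ s') in the automated prediction market maker with cost function C satisfies (s' − s)·ρ(X) − C(s') + C(s) = D_{C*}(ρ(X), ∇C(s)) − D_{C*}(ρ(X), ∇C(s')). In particular, the market implements the generalized scoring rule L(w;X) = D_{C*}(ρ(X), w) + f(X) on the hypothesis space ∇C(ℝ^n), via the surjection φ : s ↦ ∇C(s), for any f : O → ℝ. -/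
open scoped RealInnerProductSpace

variable {n : ℕ}

lemma apmm_grad_ineq (C : EuclideanSpace ℝ (Fin n) → ℝ)
    (hCconv : ConvexOn ℝ Set.univ C)
    {p s x : EuclideanSpace ℝ (Fin n)} (hg : HasGradientAt C p s) :
    C s + ⟪p, x - s⟫ ≤ C x := by
  have hline : HasDerivAt (fun t : ℝ => t • (x - s) + s) (x - s) 0 := by
    simpa using ((hasDerivAt_id (0:ℝ)).smul_const (x - s)).add_const s
  have hco : HasDerivAt (fun t : ℝ => C (t • (x - s) + s)) ⟪p, x - s⟫ 0 := by
    have hF := hg.hasFDerivAt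
    have h2 : HasFDerivAt C (InnerProductSpace.toDual ℝ _ p) ((0:ℝ) • (x - s) + s) := by
      simpa using hF
    simpa [Function.comp_def] using h2.comp_hasDerivAt 0 hline
  have hgconv : ConvexOn ℝ Set.univ (fun t : ℝ => C (t • (x - s) + s)) := by
    have h := hCconv.comp_affineMap (AffineMap.lineMap s x)
    have he : (⇑(AffineMap.lineMap s x) ⁻¹' Set.univ : Set ℝ) = Set.univ := by simp
    rw [he] at h
    simpa [Function.comp_def, AffineMap.lineMap_apply] using h
  have hs := hgconv.le_slope_of_hasDerivAt (Set.mem_univ 0) (Set.mem_univ 1) zero_lt_one hco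
  have : slope (fun t : ℝ => C (t • (x - s) + s)) 0 1 = C x - C s := by
    simp [slope_def_field]
  rw [this] at hs
  linarith

lemma apmm_grad_ineq_strict (C : EuclideanSpace ℝ (Fin n) → ℝ)
    (hCconv : ConvexOn ℝ Set.univ C) (hCstrict : StrictConvexOn ℝ Set.univ C)
    {p s x : EuclideanSpace ℝ (Fin n)} (hg : HasGradientAt C p s) (hxs : x ≠ s) :
    C s + ⟪p, x - s⟫ < C x := by
  have hm := hCstrict.2 (Set.mem_univ x) (Set.mem_univ s) hxs one_half_pos one_half_pos
    (by norm_num)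
  have h1 := apmm_grad_ineq C hCconv (x := (1/2:ℝ) • x + (1/2:ℝ) • s) hg
  have he : ((1/2:ℝ) • x + (1/2:ℝ) • s) - s = (1/2:ℝ) • (x - s) := by module
  rw [he, real_inner_smul_right] at h1
  simp only [smul_eq_mul] at hm
  linarith

lemma apmm_grad_mono (C : EuclideanSpace ℝ (Fin n) → ℝ)
    (hCconv : ConvexOn ℝ Set.univ C) (hCstrict : StrictConvexOn ℝ Set.univ C)
    (gradC : EuclideanSpace ℝ (Fin n) → EuclideanSpace ℝ (Fin n))
    (hgradC : ∀ x, HasGradientAt C (gradC x) x)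
    {a b : EuclideanSpace ℝ (Fin n)} (hab : a ≠ b) :
    0 < ⟪gradC a - gradC b, a - b⟫ := by
  have h1 := apmm_grad_ineq_strict C hCconv hCstrict (hgradC a) (Ne.symm hab)
  have h2 := apmm_grad_ineq_strict C hCconv hCstrict (hgradC b) hab
  simp only [inner_sub_left, inner_sub_right] at *
  linarith

lemma apmm_sup_bound (C : EuclideanSpace ℝ (Fin n) → ℝ)
    (hCconv : ConvexOn ℝ Set.univ C)
    {p s : EuclideanSpace ℝ (Fin n)} (hg : HasGradientAt C p s)
    (x : EuclideanSpace ℝ (Fin n)) :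
    ⟪p, x⟫ - C x ≤ ⟪p, s⟫ - C s := by
  have := apmm_grad_ineq C hCconv (x := x) hg
  rw [inner_sub_right] at this
  linarith

lemma apmm_fenchel (C : EuclideanSpace ℝ (Fin n) → ℝ)
    (hCconv : ConvexOn ℝ Set.univ C)
    (Cstar : EuclideanSpace ℝ (Fin n) → ℝ)
    (hCstarDef : ∀ y, Cstar y = ⨆ x : EuclideanSpace ℝ (Fin n), (⟪y, x⟫ - C x))
    {p s : EuclideanSpace ℝ (Fin n)} (hg : HasGradientAt C p s) :
    Cstar p = ⟪p, s⟫ - C s := by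
  rw [hCstarDef]
  refine le_antisymm (ciSup_le fun x => apmm_sup_bound C hCconv hg x) ?_
  exact le_ciSup ⟨⟪p,s⟫ - C s, by rintro _ ⟨x, rfl⟩; exact apmm_sup_bound C hCconv hg x⟩ s

lemma apmm_dirderiv (Cstar : EuclideanSpace ℝ (Fin n) → ℝ)
    {g p : EuclideanSpace ℝ (Fin n)} (hgs : HasGradientAt Cstar g p)
    (d : EuclideanSpace ℝ (Fin n)) :
    HasDerivAt (fun t : ℝ => Cstar (p + t • d)) ⟪g, d⟫ 0 := by
  have hline : HasDerivAt (fun t : ℝ => p + t • d) d 0 := by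
    simpa using ((hasDerivAt_id (0:ℝ)).smul_const d).const_add p
  have h2 : HasFDerivAt Cstar (InnerProductSpace.toDual ℝ _ g) (p + (0:ℝ) • d) := by
    simpa using hgs.hasFDerivAt
  simpa [Function.comp_def] using h2.comp_hasDerivAt 0 hline

lemma apmm_lemB (C : EuclideanSpace ℝ (Fin n) → ℝ)
    (hCconv : ConvexOn ℝ Set.univ C)
    (Cstar : EuclideanSpace ℝ (Fin n) → ℝ)
    (hCstarDef : ∀ y, Cstar y = ⨆ x : EuclideanSpace ℝ (Fin n), (⟪y, x⟫ - C x))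
    (gradC : EuclideanSpace ℝ (Fin n) → EuclideanSpace ℝ (Fin n))
    (hgradC : ∀ x, HasGradientAt C (gradC x) x)
    {g : EuclideanSpace ℝ (Fin n)} (s u : EuclideanSpace ℝ (Fin n))
    (hgs : HasGradientAt Cstar g (gradC s)) :
    ⟪s, gradC u - gradC s⟫ ≤ ⟪g, gradC u - gradC s⟫ := by
  set p := gradC s with hp
  set q := gradC u with hq
  set d := q - p with hd
  have hlb : ∀ t ∈ Set.Ioc (0:ℝ) 1, (⟪p, s⟫ - C s) + t * ⟪s, d⟫ ≤ Cstar (p + t • d) := by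
    intro t ht
    have hbdd : BddAbove (Set.range fun x => ⟪p + t • d, x⟫ - C x) := by
      refine ⟨(1-t) * (⟪p,s⟫ - C s) + t * (⟪q,u⟫ - C u), ?_⟩
      rintro _ ⟨x, rfl⟩
      have h1 := apmm_sup_bound C hCconv (hgradC s) x
      have h2 := apmm_sup_bound C hCconv (hgradC u) x
      have expand : ⟪p + t • d, x⟫ = (1-t) * ⟪p, x⟫ + t * ⟪q, x⟫ := by
        simp only [hd, inner_add_left, inner_sub_left, real_inner_smul_left]
        ring
      simp only []
      rw [expand]
      nlinarith [ht.1.le, ht.2]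
    have hle := le_ciSup hbdd s
    rw [← hCstarDef] at hle
    have expand2 : ⟪p + t • d, s⟫ = ⟪p, s⟫ + t * ⟪s, d⟫ := by
      rw [inner_add_left, real_inner_smul_left, real_inner_comm d s]
    linarith [hle, expand2 ▸ hle]
  have hco := apmm_dirderiv Cstar hgs d
  have hsl : Filter.Tendsto (slope (fun t : ℝ => Cstar (p + t • d)) 0)
      (nhdsWithin (0:ℝ) (Set.Ioi 0)) (nhds ⟪g, d⟫) :=
    (hasDerivAt_iff_tendsto_slope.mp hco).mono_left
      (nhdsWithin_mono 0 (fun x hx => ne_of_gt hx))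
  refine ge_of_tendsto hsl ?_
  filter_upwards [Ioc_mem_nhdsGT_of_mem (Set.mem_Ico.mpr ⟨le_refl 0, zero_lt_one⟩)] with t ht
  have hlbt := hlb t ht
  have hf0 : Cstar (p + (0:ℝ) • d) = ⟪p, s⟫ - C s := by
    simpa using apmm_fenchel C hCconv Cstar hCstarDef (hgradC s)
  rw [slope_def_field, le_div_iff₀ (by linarith [ht.1] : (0:ℝ) < t - 0)]
  simp only [zero_smul, add_zero] at hf0 ⊢
  nlinarith [ht.1]

lemma apmm_grad_inv (C : EuclideanSpace ℝ (Fin n) → ℝ)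
    (hCconv : ConvexOn ℝ Set.univ C) (hCstrict : StrictConvexOn ℝ Set.univ C)
    (gradC : EuclideanSpace ℝ (Fin n) → EuclideanSpace ℝ (Fin n))
    (hgradC : ∀ x, HasGradientAt C (gradC x) x)
    (Cstar : EuclideanSpace ℝ (Fin n) → ℝ)
    (hCstarDef : ∀ y, Cstar y = ⨆ x : EuclideanSpace ℝ (Fin n), (⟪y, x⟫ - C x))
    {g : EuclideanSpace ℝ (Fin n)} (s : EuclideanSpace ℝ (Fin n))
    (hgs : HasGradientAt Cstar g (gradC s)) : g = s := by
  by_contra hne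
  set p := gradC s with hp
  set w := g - s with hwdef
  have hw0 : w ≠ 0 := sub_ne_zero.mpr hne
  have hwpos : 0 < ⟪w, w⟫ :=
    lt_of_le_of_ne real_inner_self_nonneg (fun h => hw0 (inner_self_eq_zero.mp h.symm))
  have hfen : Cstar p = ⟪p, s⟫ - C s := apmm_fenchel C hCconv Cstar hCstarDef (hgradC s)
  have claim : ∀ v, ⟪w, v⟫ < 0 → ⟪g, v⟫ = 0 ∧ 0 < ⟪s, v⟫ := by
    intro v hv
    have hψ := apmm_dirderiv Cstar hgs v
    have ha : HasDerivAt (fun t : ℝ => (⟪p, s⟫ - C s) + t * ⟪s, v⟫) ⟪s, v⟫ 0 := by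
      simpa using ((hasDerivAt_id (0:ℝ)).mul_const ⟪s, v⟫).const_add (⟪p, s⟫ - C s)
    have hφ : HasDerivAt
        (fun t : ℝ => Cstar (p + t • v) - ((⟪p, s⟫ - C s) + t * ⟪s, v⟫)) ⟪w, v⟫ 0 := by
      have h := hψ.sub ha
      have he : ⟪g, v⟫ - ⟪s, v⟫ = ⟪w, v⟫ := by rw [hwdef, inner_sub_left]
      rwa [he] at h
    have hφ0 : Cstar (p + (0:ℝ) • v) - ((⟪p, s⟫ - C s) + (0:ℝ) * ⟪s, v⟫) = 0 := by
      simp [hfen]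
    have hslope : Filter.Tendsto
        (slope (fun t : ℝ => Cstar (p + t • v) - ((⟪p, s⟫ - C s) + t * ⟪s, v⟫)) 0)
        (nhdsWithin (0:ℝ) (Set.Ioi 0)) (nhds ⟪w, v⟫) :=
      (hasDerivAt_iff_tendsto_slope.mp hφ).mono_left
        (nhdsWithin_mono 0 fun x hx => ne_of_gt hx)
    have hev1 := hslope.eventually_lt_const hv
    have hev2 : ∀ᶠ t in nhdsWithin (0:ℝ) (Set.Ioi 0),
        Cstar (p + t • v) - ((⟪p, s⟫ - C s) + t * ⟪s, v⟫) < 0 := by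
      filter_upwards [hev1, eventually_mem_nhdsWithin] with t h1 h2
      rw [slope_def_field, hφ0, div_neg_iff] at h1
      rcases h1 with h | h
      · linarith [h.2, Set.mem_Ioi.mp h2]
      · linarith [h.1]
    have hev3 : ∀ᶠ t in nhdsWithin (0:ℝ) (Set.Ioi 0), Cstar (p + t • v) = 0 := by
      filter_upwards [hev2] with t htneg
      have expand : ⟪p + t • v, s⟫ = ⟪p, s⟫ + t * ⟪s, v⟫ := by
        rw [inner_add_left, real_inner_smul_left, real_inner_comm v s]
      have hlt : Cstar (p + t • v) < ⟪p + t • v, s⟫ - C s := by rw [expand]; linarith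
      by_cases hbdd : BddAbove (Set.range fun x => ⟪p + t • v, x⟫ - C x)
      · refine absurd (le_ciSup hbdd s) (not_le.mpr ?_)
        rw [← hCstarDef]; exact hlt
      · rw [hCstarDef]; exact Real.iSup_of_not_bddAbove hbdd
    have hcont : Filter.Tendsto (fun t : ℝ => Cstar (p + t • v))
        (nhdsWithin (0:ℝ) (Set.Ioi 0)) (nhds (Cstar (p + (0:ℝ) • v))) :=
      (hψ.continuousAt.tendsto).mono_left nhdsWithin_le_nhds
    have hCp0 : Cstar p = 0 := by
      have h2 : Filter.Tendsto (fun t : ℝ => Cstar (p + t • v))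
          (nhdsWithin (0:ℝ) (Set.Ioi 0)) (nhds 0) :=
        Filter.Tendsto.congr' (hev3.mono fun t ht => ht.symm) tendsto_const_nhds
      have := tendsto_nhds_unique hcont h2
      simpa using this
    have hgv : ⟪g, v⟫ = 0 := by
      have hslψ : Filter.Tendsto (slope (fun t : ℝ => Cstar (p + t • v)) 0)
          (nhdsWithin (0:ℝ) (Set.Ioi 0)) (nhds ⟪g, v⟫) :=
        (hasDerivAt_iff_tendsto_slope.mp hψ).mono_left
          (nhdsWithin_mono 0 fun x hx => ne_of_gt hx)
      have hz : Filter.Tendsto (slope (fun t : ℝ => Cstar (p + t • v)) 0)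
          (nhdsWithin (0:ℝ) (Set.Ioi 0)) (nhds 0) := by
        refine Filter.Tendsto.congr' ?_ tendsto_const_nhds
        filter_upwards [hev3] with t ht
        rw [slope_def_field, ht]
        simp [hCp0]
      exact (tendsto_nhds_unique hslψ hz).trans rfl
    refine ⟨hgv, ?_⟩
    obtain ⟨t, htneg, ht0eq, htpos⟩ :=
      (hev2.and (hev3.and eventually_mem_nhdsWithin)).exists
    rw [hfen] at hCp0
    have hmul : 0 < t * ⟪s, v⟫ := by rw [ht0eq] at htneg; linarith
    by_contra hcon
    push_neg at hcon
    nlinarith [Set.mem_Ioi.mp htpos]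
  -- halfspace argument: g = 0
  obtain ⟨hg1, hs1⟩ := claim (-w) (by
    rw [inner_neg_right]
    simpa using hwpos)
  have hg0 : g = 0 := by
    have key : ∀ u, ⟪g, u⟫ = 0 := by
      intro u
      set ε := ⟪w, w⟫ / (2 * (|⟪w, u⟫| + 1)) with hε
      have hεpos : 0 < ε := div_pos hwpos (by positivity)
      have h1 : ⟪w, -w + ε • u⟫ < 0 := by
        rw [inner_add_right, inner_neg_right, real_inner_smul_right]
        have hb : ε * ⟪w, u⟫ ≤ ε * |⟪w, u⟫| :=
          mul_le_mul_of_nonneg_left (le_abs_self _) hεpos.le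
        have h2 : ε * (|⟪w, u⟫| + 1) = ⟪w, w⟫ / 2 := by
          rw [hε]; field_simp
        nlinarith [abs_nonneg ⟪w, u⟫]
      obtain ⟨hgv, -⟩ := claim _ h1
      rw [inner_add_right, inner_neg_right, real_inner_smul_right] at hgv
      rw [inner_neg_right] at hg1
      have : ε * ⟪g, u⟫ = 0 := by linarith
      exact (mul_eq_zero.mp this).resolve_left (ne_of_gt hεpos)
    exact inner_self_eq_zero.mp (key g)
  have hsne : s ≠ 0 := by
    intro h
    exact hw0 (by rw [hwdef, hg0, h, sub_zero])
  have h2s : s + s ≠ s := by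
    intro h
    exact hsne (by simpa using h)
  have hmono := apmm_grad_mono C hCconv hCstrict gradC hgradC h2s
  have hB := apmm_lemB C hCconv Cstar hCstarDef gradC hgradC s (s + s) hgs
  rw [hg0] at hB
  rw [inner_zero_left] at hB
  have he : (s + s) - s = s := by abel
  rw [he] at hmono
  rw [real_inner_comm] at hmono
  linarith

/-- In an automated prediction market maker with cost function `C`,
the ex-post profit of a trade `(s ↦ s')` equals the decrease in the Bregman divergence
`D_{C*}(ρ(X), ·)` evaluated at the instantaneous prices `∇C(s)` and `∇C(s')`; in
particular the market implements the generalized scoring rule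
`L(w;X) = D_{C*}(ρ(X), w) + f(X)` via `φ : s ↦ ∇C(s)`, for any `f`. -/
theorem apmm_profit_eq_bregman_difference
    {n : ℕ} {O : Type*}
    (C : EuclideanSpace ℝ (Fin n) → ℝ)
    (hCconv : ConvexOn ℝ Set.univ C)
    (hCstrict : StrictConvexOn ℝ Set.univ C)
    (gradC : EuclideanSpace ℝ (Fin n) → EuclideanSpace ℝ (Fin n))
    (hgradC : ∀ x, HasGradientAt C (gradC x) x)
    (Cstar : EuclideanSpace ℝ (Fin n) → ℝ)
    (hCstarDef : ∀ y, Cstar y = ⨆ x : EuclideanSpace ℝ (Fin n), (⟪y, x⟫ - C x))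
    (gradCstar : EuclideanSpace ℝ (Fin n) → EuclideanSpace ℝ (Fin n))
    (hgradCstar : ∀ p ∈ Set.range gradC, HasGradientAt Cstar (gradCstar p) p)
    (ρ : O → EuclideanSpace ℝ (Fin n)) (hρ : ∀ X, ρ X ∈ Set.range gradC)
    (D : EuclideanSpace ℝ (Fin n) → EuclideanSpace ℝ (Fin n) → ℝ)
    (hD : ∀ x y, D x y = Cstar x - Cstar y - ⟪gradCstar y, x - y⟫) :
    (∀ (s s' : EuclideanSpace ℝ (Fin n)) (X : O),
        ⟪s' - s, ρ X⟫ - C s' + C s = D (ρ X) (gradC s) - D (ρ X) (gradC s'))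
    ∧ ∀ (f : O → ℝ) (L : EuclideanSpace ℝ (Fin n) → O → ℝ),
        (∀ w X, L w X = D (ρ X) w + f X) →
        Function.Surjective (fun s : EuclideanSpace ℝ (Fin n) =>
          (⟨gradC s, Set.mem_range_self s⟩ : Set.range gradC)) ∧
        ∀ (s s' : EuclideanSpace ℝ (Fin n)) (X : O),
          ⟪s' - s, ρ X⟫ - C s' + C s = L (gradC s) X - L (gradC s') X := by
  have ginv : ∀ s, gradCstar (gradC s) = s := fun s =>
    apmm_grad_inv C hCconv hCstrict gradC hgradC Cstar hCstarDef s
      (hgradCstar _ ⟨s, rfl⟩)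
  have fen : ∀ s, Cstar (gradC s) = ⟪gradC s, s⟫ - C s := fun s =>
    apmm_fenchel C hCconv Cstar hCstarDef (hgradC s)
  have main : ∀ (s s' : EuclideanSpace ℝ (Fin n)) (X : O),
      ⟪s' - s, ρ X⟫ - C s' + C s = D (ρ X) (gradC s) - D (ρ X) (gradC s') := by
    intro s s' X
    rw [hD, hD, fen s, fen s', ginv s, ginv s']
    simp only [inner_sub_left, inner_sub_right]
    rw [real_inner_comm (gradC s) s, real_inner_comm (gradC s') s']
    ring
  refine ⟨main, fun f L hL => ⟨?_, fun s s' X => by rw [hL, hL, main s s' X]; ring⟩⟩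
  rintro ⟨q, u, rfl⟩
  exact ⟨u, rfl⟩
end

section
/- Let C : ℝ^n → ℝ be convex, differentiable, and strictly convex, with convex conjugate C* differentiable at every point of ∇C(ℝ^n). Let P be a probability distribution on an outcome space O and let ρ : O → ℝ^n be P-integrable with ρ(X) ∈ ∇C(ℝ^n) for all X and with μ := E_{X∼P}[ρ(X)] ∈ ∇C(ℝ^n), and suppose C* is differentiable at μ. Then for all s, s' ∈ ℝ^n, the expected ex-post profit of the trade (s ↦ s') satisfies E_{X∼P}[(s' − s)·ρ(X) − C(s') + C(s)] = D_{C*}(μ, ∇C(s)) − D_{C*}(μ, ∇C(s')). -/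
open MeasureTheory
open scoped RealInnerProductSpace

section Aux

variable {E : Type*} [NormedAddCommGroup E] [InnerProductSpace ℝ E] [FiniteDimensional ℝ E]

/-- Gradient inequality for a convex differentiable function. -/
lemma aux_grad_ineq (C : E → ℝ) (hCconv : ConvexOn ℝ Set.univ C)
    {g s : E} (hg : HasGradientAt C g s) (x : E) :
    ⟪g, x - s⟫ ≤ C x - C s := by
  set m : ℝ → E := fun t => s + t • (x - s) with hm
  have hconv : ConvexOn ℝ Set.univ (fun t => C (m t)) := by
    refine ⟨convex_univ, fun t₁ _ t₂ _ a b ha hb hab => ?_⟩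
    have hmeq : m (a • t₁ + b • t₂) = a • m t₁ + b • m t₂ := by
      simp only [hm, smul_eq_mul]
      match_scalars <;> ring_nf <;> nlinarith [hab]
    calc C (m (a • t₁ + b • t₂)) = C (a • m t₁ + b • m t₂) := by rw [hmeq]
      _ ≤ a • C (m t₁) + b • C (m t₂) :=
        hCconv.2 (Set.mem_univ _) (Set.mem_univ _) ha hb hab
  have hmder : HasDerivAt m (x - s) 0 := by
    simpa [hm] using (((hasDerivAt_id (0 : ℝ)).smul_const (x - s)).const_add s)
  have hder : HasDerivAt (fun t => C (m t)) ⟪g, x - s⟫ 0 := by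
    have hms : m 0 = s := by simp [hm]
    have hg' : HasFDerivAt C ((InnerProductSpace.toDual ℝ E) g) (m 0) := by
      rw [hms]; exact hg.hasFDerivAt
    have := hg'.comp_hasDerivAt (0 : ℝ) hmder
    simpa [InnerProductSpace.toDual_apply_apply, Function.comp_def] using this
  have := hconv.le_slope_of_hasDerivAt (Set.mem_univ (0 : ℝ)) (Set.mem_univ (1 : ℝ))
    one_pos hder
  simpa [slope, hm] using this

/-- Strict gradient inequality for a strictly convex differentiable function. -/
lemma aux_grad_ineq_strict (C : E → ℝ) (hCstrict : StrictConvexOn ℝ Set.univ C)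
    {g s : E} (hg : HasGradientAt C g s) {x : E} (hx : x ≠ s) :
    ⟪g, x - s⟫ < C x - C s := by
  set m : E := (1/2 : ℝ) • x + (1/2 : ℝ) • s with hmdef
  have hms : m - s = (1/2 : ℝ) • (x - s) := by rw [hmdef]; module
  have h1 : ⟪g, m - s⟫ ≤ C m - C s := aux_grad_ineq C hCstrict.convexOn hg m
  have h2 : C m < (1/2 : ℝ) • C x + (1/2 : ℝ) • C s :=
    hCstrict.2 (Set.mem_univ x) (Set.mem_univ s) hx (by norm_num) (by norm_num) (by norm_num)
  rw [hms, real_inner_smul_right] at h1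
  simp only [smul_eq_mul] at h2
  linarith

/-- Strict monotonicity of the gradient of a strictly convex function. -/
lemma aux_grad_mono (C : E → ℝ) (hCstrict : StrictConvexOn ℝ Set.univ C)
    (gradC : E → E) (hgradC : ∀ x, HasGradientAt C (gradC x) x)
    (s : E) {v : E} (hv : v ≠ 0) :
    0 < ⟪v, gradC (s + v) - gradC s⟫ := by
  have h1 : ⟪gradC s, (s + v) - s⟫ < C (s + v) - C s :=
    aux_grad_ineq_strict C hCstrict (hgradC s) (by simpa using hv)
  have h2 : ⟪gradC (s + v), s - (s + v)⟫ ≤ C s - C (s + v) :=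
    aux_grad_ineq C hCstrict.convexOn (hgradC (s + v)) s
  have hsv : (s + v) - s = v := by abel
  have hvs : s - (s + v) = -v := by abel
  rw [hsv] at h1
  rw [hvs, inner_neg_right] at h2
  rw [inner_sub_right,
    show (⟪v, gradC (s + v)⟫ : ℝ) = ⟪gradC (s + v), v⟫ from real_inner_comm _ _,
    show (⟪v, gradC s⟫ : ℝ) = ⟪gradC s, v⟫ from real_inner_comm _ _]
  linarith

/-- If a convex set pokes into every open half-space through `g ∈ A`,
then `g` is an interior point. -/
lemma aux_mem_interior {A : Set E} (hA : Convex ℝ A) {g : E} (hg : g ∈ A)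
    (poke : ∀ v : E, v ≠ 0 → ∃ z ∈ A, 0 < ⟪v, z - g⟫) : g ∈ interior A := by
  by_contra hgi
  obtain ⟨v, hv0, hvle⟩ : ∃ v : E, v ≠ 0 ∧ ∀ z ∈ A, ⟪v, z - g⟫ ≤ 0 := by
    by_cases hspan : affineSpan ℝ A = ⊤
    · have hint : (interior A).Nonempty :=
        (hA.interior_nonempty_iff_affineSpan_eq_top).2 hspan
      obtain ⟨x₀, hx₀⟩ := hint
      obtain ⟨f, hf⟩ := geometric_hahn_banach_open_point hA.interior isOpen_interior hgi
      set v := (InnerProductSpace.toDual ℝ E).symm f with hvdef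
      have hfv : ∀ w, f w = ⟪v, w⟫ := by
        intro w
        rw [hvdef, InnerProductSpace.toDual_symm_apply]
      have hv0 : v ≠ 0 := by
        intro h0
        have := hf x₀ hx₀
        rw [hfv x₀, hfv g, h0] at this
        simp at this
      refine ⟨v, hv0, fun z hz => ?_⟩
      by_contra hlt
      push_neg at hlt
      have hfz : f g < f z := by
        rw [hfv g, hfv z]
        have := hlt
        rw [inner_sub_right] at this
        linarith
      set δ : ℝ := f z - f g with hδdef
      set M : ℝ := |f x₀ - f z| + 1 with hMdef
      have hM : 0 < M := by positivity
      set t : ℝ := min (δ / (2 * M)) 1 with htdef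
      have hδ : 0 < δ := by simp [hδdef]; linarith
      have ht0 : 0 < t := lt_min (by positivity) one_pos
      have ht1 : t ≤ 1 := min_le_right _ _
      have htM : t * M ≤ δ / 2 := by
        have h := min_le_left (δ / (2 * M)) 1
        calc t * M ≤ (δ / (2 * M)) * M := by nlinarith
          _ = δ / 2 := by field_simp
      have hmem : t • x₀ + (1 - t) • z ∈ interior A :=
        hA.combo_interior_closure_mem_interior hx₀ (subset_closure hz) ht0
          (by linarith) (by ring)
      have hflt := hf _ hmem
      rw [map_add, f.map_smul, f.map_smul] at hflt
      simp only [smul_eq_mul] at hflt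
      have habs : f x₀ - f z ≥ -|f x₀ - f z| := neg_abs_le _
      have hM1 : |f x₀ - f z| ≤ M - 1 := by simp [hMdef]
      have e₁ : t * (-|f x₀ - f z|) ≤ t * (f x₀ - f z) :=
        mul_le_mul_of_nonneg_left habs ht0.le
      have e₂ : t * |f x₀ - f z| ≤ t * (M - 1) :=
        mul_le_mul_of_nonneg_left hM1 ht0.le
      have e₃ : t * (M - 1) ≤ t * M := by nlinarith
      nlinarith [e₁, e₂, e₃, htM, hflt]
    · have hdir : (affineSpan ℝ A).direction ≠ ⊤ := by
        intro h
        exact hspan ((AffineSubspace.direction_eq_top_iff_of_nonempty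
          ((affineSpan_nonempty ℝ).2 ⟨g, hg⟩)).1 h)
      have horth : (affineSpan ℝ A).directionᗮ ≠ ⊥ :=
        fun h => hdir (Submodule.orthogonal_eq_bot_iff.mp h)
      obtain ⟨v, hvmem, hv0⟩ := (Submodule.ne_bot_iff _).1 horth
      refine ⟨v, hv0, fun z hz => le_of_eq ?_⟩
      have hzg : z - g ∈ (affineSpan ℝ A).direction := by
        simpa using AffineSubspace.vsub_mem_direction
          (subset_affineSpan ℝ A hz) (subset_affineSpan ℝ A hg)
      have := Submodule.inner_right_of_mem_orthogonal hzg hvmem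
      rw [real_inner_comm] at this
      exact this
  obtain ⟨z, hz, hzgt⟩ := poke v hv0
  exact absurd (hvle z hz) (not_le.2 hzgt)

/-- Fenchel–Young equality at a differentiability point. -/
lemma aux_fenchel (C : E → ℝ) (hCconv : ConvexOn ℝ Set.univ C)
    (Cstar : E → ℝ) (hCstarDef : ∀ y, Cstar y = ⨆ x : E, (⟪y, x⟫ - C x))
    {g s : E} (hg : HasGradientAt C g s) :
    Cstar g = ⟪g, s⟫ - C s := by
  rw [hCstarDef]
  have hbound : ∀ x : E, ⟪g, x⟫ - C x ≤ ⟪g, s⟫ - C s := by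
    intro x
    have := aux_grad_ineq C hCconv hg x
    rw [inner_sub_right] at this
    linarith
  refine le_antisymm (ciSup_le hbound) ?_
  exact le_ciSup ⟨⟪g, s⟫ - C s, by rintro _ ⟨x, rfl⟩; exact hbound x⟩ s

/-- The gradient of the conjugate at `∇C(s)` is `s`. -/
lemma aux_grad_conj (C : E → ℝ) (hCstrict : StrictConvexOn ℝ Set.univ C)
    (gradC : E → E) (hgradC : ∀ x, HasGradientAt C (gradC x) x)
    (Cstar : E → ℝ) (hCstarDef : ∀ y, Cstar y = ⨆ x : E, (⟪y, x⟫ - C x))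
    {s gs : E} (hgs : HasGradientAt Cstar gs (gradC s)) :
    gs = s := by
  have hCconv : ConvexOn ℝ Set.univ C := hCstrict.convexOn
  set A : Set E := {z | BddAbove (Set.range fun x => ⟪z, x⟫ - C x)} with hAdef
  have hconvA : Convex ℝ A := by
    intro z₁ hz₁ z₂ hz₂ a b ha hb hab
    obtain ⟨M₁, hM₁⟩ := hz₁
    obtain ⟨M₂, hM₂⟩ := hz₂
    refine ⟨a * M₁ + b * M₂, ?_⟩
    rintro _ ⟨x, rfl⟩
    have h₁ : ⟪z₁, x⟫ - C x ≤ M₁ := hM₁ ⟨x, rfl⟩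
    have h₂ : ⟪z₂, x⟫ - C x ≤ M₂ := hM₂ ⟨x, rfl⟩
    show ⟪a • z₁ + b • z₂, x⟫ - C x ≤ a * M₁ + b * M₂
    have e₁ : a * (⟪z₁, x⟫ - C x) ≤ a * M₁ := mul_le_mul_of_nonneg_left h₁ ha
    have e₂ : b * (⟪z₂, x⟫ - C x) ≤ b * M₂ := mul_le_mul_of_nonneg_left h₂ hb
    have e₃ : a * C x + b * C x = C x := by rw [← add_mul, hab, one_mul]
    simp only [inner_add_left, real_inner_smul_left]
    linarith [e₁, e₂, e₃]
  have hmemA : ∀ u : E, gradC u ∈ A := by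
    intro u
    refine ⟨⟪gradC u, u⟫ - C u, ?_⟩
    rintro _ ⟨x, rfl⟩
    show ⟪gradC u, x⟫ - C x ≤ ⟪gradC u, u⟫ - C u
    have := aux_grad_ineq C hCconv (hgradC u) x
    rw [inner_sub_right] at this
    linarith
  have hginterior : gradC s ∈ interior A := by
    refine aux_mem_interior hconvA (hmemA s) fun v hv => ⟨gradC (s + v), hmemA _, ?_⟩
    exact aux_grad_mono C hCstrict gradC hgradC s hv
  -- z ↦ Cstar z - ⟪s, z⟫ has a local minimum at gradC s
  have hlow : ∀ z ∈ A, ⟪z, s⟫ - C s ≤ Cstar z := by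
    intro z hz
    rw [hCstarDef]
    exact le_ciSup hz s
  have hFY : Cstar (gradC s) = ⟪gradC s, s⟫ - C s :=
    aux_fenchel C hCconv Cstar hCstarDef (hgradC s)
  have hmin : IsLocalMin (fun z => Cstar z - ⟪s, z⟫) (gradC s) := by
    have hev : ∀ᶠ z in nhds (gradC s), z ∈ A :=
      mem_interior_iff_mem_nhds.1 hginterior
    refine hev.mono fun z hz => ?_
    have := hlow z hz
    have hcomm : ⟪z, s⟫ = ⟪s, z⟫ := real_inner_comm _ _
    have hcomm' : ⟪gradC s, s⟫ = ⟪s, gradC s⟫ := real_inner_comm _ _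
    simp only [hFY]
    linarith
  have hder : HasFDerivAt (fun z => Cstar z - ⟪s, z⟫)
      (InnerProductSpace.toDual ℝ E gs - innerSL ℝ s) (gradC s) :=
    hgs.hasFDerivAt.sub ((innerSL ℝ s).hasFDerivAt)
  have hzero := hmin.hasFDerivAt_eq_zero hder
  have : ∀ w : E, ⟪gs, w⟫ = ⟪s, w⟫ := by
    intro w
    have := congrFun (congrArg DFunLike.coe hzero) w
    simp only [ContinuousLinearMap.sub_apply, ContinuousLinearMap.zero_apply,
      InnerProductSpace.toDual_apply_apply, innerSL_apply_apply] at this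
    linarith
  have hsub : ∀ w : E, ⟪gs - s, w⟫ = 0 := by
    intro w
    rw [inner_sub_left, this w]
    ring
  have := hsub (gs - s)
  rw [inner_self_eq_zero] at this
  exact sub_eq_zero.1 this

end Aux

/-- In an automated prediction market maker with cost function `C`,
the expected ex-post profit of a trade `(s ↦ s')` under belief `P` equals
`D_{C*}(μ, ∇C(s)) − D_{C*}(μ, ∇C(s'))`, where `μ = E_{X∼P}[ρ(X)]`. -/
theorem apmm_expected_profit_eq_bregman_difference_of_mean
    {n : ℕ} {O : Type*} [MeasurableSpace O]
    (C : EuclideanSpace ℝ (Fin n) → ℝ)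
    (hCconv : ConvexOn ℝ Set.univ C)
    (hCstrict : StrictConvexOn ℝ Set.univ C)
    (gradC : EuclideanSpace ℝ (Fin n) → EuclideanSpace ℝ (Fin n))
    (hgradC : ∀ x, HasGradientAt C (gradC x) x)
    (Cstar : EuclideanSpace ℝ (Fin n) → ℝ)
    (hCstarDef : ∀ y, Cstar y = ⨆ x : EuclideanSpace ℝ (Fin n), (⟪y, x⟫ - C x))
    (gradCstar : EuclideanSpace ℝ (Fin n) → EuclideanSpace ℝ (Fin n))
    (hgradCstar : ∀ p ∈ Set.range gradC, HasGradientAt Cstar (gradCstar p) p)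
    (P : Measure O) [IsProbabilityMeasure P]
    (ρ : O → EuclideanSpace ℝ (Fin n))
    (hρint : Integrable ρ P) (hρmem : ∀ X, ρ X ∈ Set.range gradC)
    (μ : EuclideanSpace ℝ (Fin n)) (hμ : μ = ∫ X, ρ X ∂P)
    (hμmem : μ ∈ Set.range gradC)
    (hμdiff : HasGradientAt Cstar (gradCstar μ) μ)
    (D : EuclideanSpace ℝ (Fin n) → EuclideanSpace ℝ (Fin n) → ℝ)
    (hD : ∀ x y, D x y = Cstar x - Cstar y - ⟪gradCstar y, x - y⟫) :
    ∀ s s' : EuclideanSpace ℝ (Fin n),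
      ∫ X, (⟪s' - s, ρ X⟫ - C s' + C s) ∂P
        = D μ (gradC s) - D μ (gradC s') := by
  intro s s'
  have hfen : ∀ u, Cstar (gradC u) = ⟪gradC u, u⟫ - C u := fun u =>
    aux_fenchel C hCconv Cstar hCstarDef (hgradC u)
  have hgc : ∀ u, gradCstar (gradC u) = u := fun u =>
    aux_grad_conj C hCstrict gradC hgradC Cstar hCstarDef (hgradCstar _ ⟨u, rfl⟩)
  have h1 : ∫ X, (⟪s' - s, ρ X⟫ - C s' + C s) ∂P = ⟪s' - s, μ⟫ - C s' + C s := by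
    have heq : (fun X => ⟪s' - s, ρ X⟫ - C s' + C s)
        = fun X => ⟪s' - s, ρ X⟫ + (-C s' + C s) := by
      funext X; ring
    rw [heq, integral_add (hρint.const_inner _) (integrable_const _),
      integral_const, integral_inner hρint]
    simp [hμ]
    ring
  rw [h1, hD, hD, hfen s, hfen s', hgc s, hgc s']
  simp only [inner_sub_left, inner_sub_right]
  rw [real_inner_comm s (gradC s), real_inner_comm s' (gradC s')]
  ring
end
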